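/- arXiv:2104.01931 — 4 statements merged into one kernel-verified Lean document; each statement's English description precedes it below -/
import Mathlib

section
/- Let H be an n×n Hermitian complex matrix, B an n×L complex matrix such that H·B = B·M for some L×L complex matrix M, E = B†B Hermitian positive definite, and D = B†HB. Suppose the vectors v_1,…,v_L ∈ ℂ^L and real numbers λ_1,…,λ_L satisfy D v_j = λ_j E v_j for all j and v_i† E v_j = δ_{ij} for all i,j. Then for every real T, exp(−iTH)·B = B·(Σ_{j=1}^L exp(−iλ_j T)·v_j v_j† E). In particular, for any coefficient vector α(0) ∈ ℂ^L, the time-evolved state exp(−iTH)·B·α(0) equals B·α(T) with α(T) = (Σ_j exp(−iλ_j T) v_j v_j† E)·α(0). -/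
open Matrix
open scoped ComplexOrder

private theorem cqff_exp_intertwine {n L : ℕ} (A : Matrix (Fin n) (Fin n) ℂ)
    (B : Matrix (Fin n) (Fin L) ℂ) (C : Matrix (Fin L) (Fin L) ℂ)
    (h : A * B = B * C) :
    NormedSpace.exp A * B = B * NormedSpace.exp C := by
  letI : SeminormedRing (Matrix (Fin n) (Fin n) ℂ) := Matrix.linftyOpSemiNormedRing
  letI : NormedRing (Matrix (Fin n) (Fin n) ℂ) := Matrix.linftyOpNormedRing
  letI : NormedAlgebra ℂ (Matrix (Fin n) (Fin n) ℂ) := Matrix.linftyOpNormedAlgebra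
  letI : SeminormedRing (Matrix (Fin L) (Fin L) ℂ) := Matrix.linftyOpSemiNormedRing
  letI : NormedRing (Matrix (Fin L) (Fin L) ℂ) := Matrix.linftyOpNormedRing
  letI : NormedAlgebra ℂ (Matrix (Fin L) (Fin L) ℂ) := Matrix.linftyOpNormedAlgebra
  have hpow : ∀ k : ℕ, A ^ k * B = B * C ^ k := by
    intro k
    induction k with
    | zero => simp
    | succ k ih =>
      rw [pow_succ, pow_succ, Matrix.mul_assoc, h, ← Matrix.mul_assoc, ih, Matrix.mul_assoc]
  have h1 : HasSum (fun k : ℕ => ((Nat.factorial k : ℂ))⁻¹ • A ^ k) (NormedSpace.exp A) :=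
    NormedSpace.exp_series_hasSum_exp' (𝕂 := ℂ) A
  have h2 : HasSum (fun k : ℕ => ((Nat.factorial k : ℂ))⁻¹ • C ^ k) (NormedSpace.exp C) :=
    NormedSpace.exp_series_hasSum_exp' (𝕂 := ℂ) C
  have cR : Continuous fun X : Matrix (Fin n) (Fin n) ℂ => X * B :=
    Continuous.matrix_mul continuous_id continuous_const
  have cL : Continuous fun X : Matrix (Fin L) (Fin L) ℂ => B * X :=
    Continuous.matrix_mul continuous_const continuous_id
  have h1' : HasSum (fun k : ℕ => ((Nat.factorial k : ℂ))⁻¹ • A ^ k * B) (NormedSpace.exp A * B) :=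
    h1.map (AddMonoidHom.mk' (fun X : Matrix (Fin n) (Fin n) ℂ => X * B) fun X Y => Matrix.add_mul X Y B) cR
  have h2' : HasSum (fun k : ℕ => B * (((Nat.factorial k : ℂ))⁻¹ • C ^ k)) (B * NormedSpace.exp C) :=
    h2.map (AddMonoidHom.mk' (fun X : Matrix (Fin L) (Fin L) ℂ => B * X) fun X Y => Matrix.mul_add B X Y) cL
  have heq : (fun k : ℕ => ((Nat.factorial k : ℂ))⁻¹ • A ^ k * B)
      = fun k : ℕ => B * (((Nat.factorial k : ℂ))⁻¹ • C ^ k) := by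
    funext k
    rw [Matrix.smul_mul, hpow, Matrix.mul_smul]
  rw [heq] at h1'
  exact h1'.unique h2'

/-- Correctness of the CQFF fast-forwarded evolution: if `H B = B M`, `E = Bᴴ B` is
positive definite, `D = Bᴴ H B`, and `(λ j, v j)` solve the generalized eigenvalue
problem `D v = λ E v` with `E`-orthonormal eigenvectors, then
`exp(-iTH) B = B (∑ j, exp(-i λ_j T) v_j v_jᴴ E)`, and consequently
`exp(-iTH) B α(0) = B α(T)` with `α(T) = (∑ j, exp(-i λ_j T) v_j v_jᴴ E) α(0)`. -/
theorem cqff_fast_forwarding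
    (n L : ℕ) (H : Matrix (Fin n) (Fin n) ℂ) (hH : H.IsHermitian)
    (B : Matrix (Fin n) (Fin L) ℂ)
    (M : Matrix (Fin L) (Fin L) ℂ) (hHB : H * B = B * M)
    (E D : Matrix (Fin L) (Fin L) ℂ)
    (hE : E = Bᴴ * B) (hEpd : E.PosDef)
    (hD : D = Bᴴ * H * B)
    (v : Fin L → (Fin L → ℂ)) (lam : Fin L → ℝ)
    (heig : ∀ j, D.mulVec (v j) = (lam j : ℂ) • E.mulVec (v j))
    (horth : ∀ i j, star (v i) ⬝ᵥ E.mulVec (v j) = if i = j then 1 else 0)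
    (T : ℝ) :
    NormedSpace.exp ((-(Complex.I * (T : ℂ))) • H) * B =
      B * (∑ j, Complex.exp (-(Complex.I * (lam j : ℂ) * (T : ℂ))) •
            (vecMulVec (v j) (star (v j)) * E)) ∧
    ∀ α₀ : Fin L → ℂ,
      (NormedSpace.exp ((-(Complex.I * (T : ℂ))) • H)).mulVec (B.mulVec α₀) =
        B.mulVec ((∑ j, Complex.exp (-(Complex.I * (lam j : ℂ) * (T : ℂ))) •
            (vecMulVec (v j) (star (v j)) * E)).mulVec α₀) := by
  classical
  set V : Matrix (Fin L) (Fin L) ℂ := Matrix.of fun i j => v j i with hV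
  -- orthonormality in matrix form
  have key : ∀ i j, (Vᴴ * E * V) i j = star (v i) ⬝ᵥ E.mulVec (v j) := by
    intro i j
    simp only [Matrix.mul_apply, Matrix.conjTranspose_apply, hV, Matrix.of_apply,
      dotProduct, Matrix.mulVec, Pi.star_apply, Finset.sum_mul, Finset.mul_sum]
    rw [Finset.sum_comm]
    exact Finset.sum_congr rfl fun k _ => Finset.sum_congr rfl fun l _ => by ring
  have hVEV : Vᴴ * E * V = 1 := by
    ext i j
    rw [key i j, horth i j, Matrix.one_apply]
  have hEu : IsUnit E := hEpd.isUnit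
  have hEdet : IsUnit E.det := (Matrix.isUnit_iff_isUnit_det E).mp hEu
  have hVright : V * (Vᴴ * E) = 1 := mul_eq_one_comm.mp hVEV
  have hVunit : IsUnit V := ⟨⟨V, Vᴴ * E, hVright, hVEV⟩, rfl⟩
  have hVdet : IsUnit V.det := (Matrix.isUnit_iff_isUnit_det V).mp hVunit
  have hVinv : V⁻¹ = Vᴴ * E := Matrix.inv_eq_left_inv hVEV
  have hDEM : D = E * M := by
    rw [hD, Matrix.mul_assoc, hHB, ← Matrix.mul_assoc, ← hE]
  have hMV : M * V = V * Matrix.diagonal (fun j => (lam j : ℂ)) := by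
    have hcan : E * (M * V) = E * (V * Matrix.diagonal fun j => (lam j : ℂ)) := by
      ext i j
      have h1 : (E * (M * V)) i j = D.mulVec (v j) i := by
        rw [← Matrix.mul_assoc, ← hDEM]
        simp [Matrix.mul_apply, Matrix.mulVec, dotProduct, hV]
      have h2 : (E * (V * Matrix.diagonal fun j => (lam j : ℂ))) i j
          = ((lam j : ℂ) • E.mulVec (v j)) i := by
        rw [← Matrix.mul_assoc, Matrix.mul_diagonal]
        simp [Matrix.mul_apply, Matrix.mulVec, dotProduct, hV, Finset.sum_mul,
          Finset.mul_sum, mul_comm, mul_left_comm]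
      rw [h1, h2, heig j]
    have h3 := congrArg (fun X => E⁻¹ * X) hcan
    simpa only [← Matrix.mul_assoc, Matrix.nonsing_inv_mul E hEdet, Matrix.one_mul] using h3
  have hM : M = V * Matrix.diagonal (fun j => (lam j : ℂ)) * V⁻¹ := by
    rw [← hMV, Matrix.mul_assoc, Matrix.mul_nonsing_inv V hVdet, Matrix.mul_one]
  have hdiag : (-(Complex.I * (T : ℂ))) • Matrix.diagonal (fun j => (lam j : ℂ))
      = Matrix.diagonal (fun j => -(Complex.I * (lam j : ℂ) * (T : ℂ))) := by
    rw [← Matrix.diagonal_smul]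
    refine congrArg Matrix.diagonal (funext fun j => ?_)
    show -(Complex.I * (T : ℂ)) * (lam j : ℂ) = -(Complex.I * (lam j : ℂ) * (T : ℂ))
    ring
  have hsmul : (-(Complex.I * (T : ℂ))) • M
      = V * Matrix.diagonal (fun j => -(Complex.I * (lam j : ℂ) * (T : ℂ))) * V⁻¹ := by
    rw [hM, ← smul_mul_assoc, ← mul_smul_comm, hdiag]
  have hexpd : NormedSpace.exp (fun j => -(Complex.I * (lam j : ℂ) * (T : ℂ)) : Fin L → ℂ)
      = fun j => Complex.exp (-(Complex.I * (lam j : ℂ) * (T : ℂ))) := by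
    funext j
    rw [Pi.coe_exp, ← Complex.exp_eq_exp_ℂ]
  have hexpM : NormedSpace.exp ((-(Complex.I * (T : ℂ))) • M)
      = V * Matrix.diagonal (fun j => Complex.exp (-(Complex.I * (lam j : ℂ) * (T : ℂ))))
          * (Vᴴ * E) := by
    rw [hsmul, Matrix.exp_conj V _ hVunit, Matrix.exp_diagonal, hexpd, hVinv]
  have hsum : (∑ j, Complex.exp (-(Complex.I * (lam j : ℂ) * (T : ℂ))) •
        vecMulVec (v j) (star (v j)))
      = V * Matrix.diagonal (fun j => Complex.exp (-(Complex.I * (lam j : ℂ) * (T : ℂ)))) * Vᴴ := by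
    ext i k
    rw [Matrix.sum_apply, Matrix.mul_apply]
    simp only [Matrix.mul_diagonal, Matrix.conjTranspose_apply,
      Matrix.smul_apply, Matrix.vecMulVec_apply, smul_eq_mul, Matrix.of_apply,
      Pi.star_apply, hV]
    exact Finset.sum_congr rfl fun j _ => by ring
  have hS : (∑ j, Complex.exp (-(Complex.I * (lam j : ℂ) * (T : ℂ))) •
        (vecMulVec (v j) (star (v j)) * E))
      = V * Matrix.diagonal (fun j => Complex.exp (-(Complex.I * (lam j : ℂ) * (T : ℂ))))
          * (Vᴴ * E) := by
    have h4 : (∑ j, Complex.exp (-(Complex.I * (lam j : ℂ) * (T : ℂ))) •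
          (vecMulVec (v j) (star (v j)) * E))
        = (∑ j, Complex.exp (-(Complex.I * (lam j : ℂ) * (T : ℂ))) •
            vecMulVec (v j) (star (v j))) * E := by
      rw [Finset.sum_mul]
      exact Finset.sum_congr rfl fun j _ => (Matrix.smul_mul _ _ _).symm
    rw [h4, hsum, Matrix.mul_assoc]
  have hint : (-(Complex.I * (T : ℂ))) • H * B = B * ((-(Complex.I * (T : ℂ))) • M) := by
    rw [Matrix.smul_mul, Matrix.mul_smul, hHB]
  have hmain : NormedSpace.exp ((-(Complex.I * (T : ℂ))) • H) * B =
      B * (∑ j, Complex.exp (-(Complex.I * (lam j : ℂ) * (T : ℂ))) •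
            (vecMulVec (v j) (star (v j)) * E)) := by
    rw [cqff_exp_intertwine _ _ _ hint, hexpM, hS]
  refine ⟨hmain, fun α₀ => ?_⟩
  rw [Matrix.mulVec_mulVec, hmain, ← Matrix.mulVec_mulVec]
end

section
/- Let E be an L×L Hermitian positive definite complex matrix, v_1,…,v_L ∈ ℂ^L with v_i† E v_j = δ_{ij} for all i,j, and λ_1,…,λ_L real. Define M = Σ_{j=1}^L λ_j v_j v_j† E. Then for every real Δt and every natural number N, (𝟙 − iΔt·M)^N = Σ_{j=1}^L (1 − iλ_jΔt)^N v_j v_j† E. -/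
open Matrix
open scoped ComplexOrder

lemma cqff_aux_mul {L : ℕ} (E : Matrix (Fin L) (Fin L) ℂ)
    (v w : Fin L → ℂ) (A : Matrix (Fin L) (Fin L) ℂ) :
    (vecMulVec v (star v) * E) * (vecMulVec w (star w) * A)
      = (star v ⬝ᵥ E.mulVec w) • (vecMulVec v (star w) * A) := by
  ext a b
  simp only [Matrix.mul_apply, vecMulVec_apply, Matrix.smul_apply, smul_eq_mul,
    dotProduct, Matrix.mulVec, Finset.sum_mul, Finset.mul_sum, Pi.star_apply]
  rw [Finset.sum_comm]
  apply Finset.sum_congr rfl; intro c _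
  rw [Finset.sum_comm]
  apply Finset.sum_congr rfl; intro d _
  apply Finset.sum_congr rfl; intro e _
  ring

/-- Identity underlying the tweaked CQFF algorithm: with
`M = ∑ j, λ_j v_j v_jᴴ E` for an `E`-orthonormal family, for every timestep `Δt`
and every `N`, `(𝟙 - iΔt M)^N = ∑ j, (1 - i λ_j Δt)^N v_j v_jᴴ E`. -/
theorem cqff_tweaked_fast_forwarding
    (L : ℕ) (E : Matrix (Fin L) (Fin L) ℂ) (hE : E.PosDef)
    (v : Fin L → (Fin L → ℂ)) (lam : Fin L → ℝ)
    (horth : ∀ i j, star (v i) ⬝ᵥ E.mulVec (v j) = if i = j then 1 else 0)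
    (M : Matrix (Fin L) (Fin L) ℂ)
    (hM : M = ∑ j, (lam j : ℂ) • (vecMulVec (v j) (star (v j)) * E))
    (Δt : ℝ) (N : ℕ) :
    ((1 : Matrix (Fin L) (Fin L) ℂ) - (Complex.I * (Δt : ℂ)) • M) ^ N =
      ∑ j, ((1 : ℂ) - Complex.I * (lam j : ℂ) * (Δt : ℂ)) ^ N •
        (vecMulVec (v j) (star (v j)) * E) := by
  set P : Fin L → Matrix (Fin L) (Fin L) ℂ :=
    fun j => vecMulVec (v j) (star (v j)) * E with hP
  have hPP : ∀ i j, P i * P j = (if i = j then (1:ℂ) else 0) • P i := by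
    intro i j
    rw [hP]
    simp only
    rw [cqff_aux_mul E (v i) (v j) E, horth i j]
    by_cases h : i = j
    · subst h; simp
    · simp [h]
  -- V with columns v j
  set V : Matrix (Fin L) (Fin L) ℂ := Matrix.of (fun i j => v j i) with hV
  have hVEV : Vᴴ * E * V = 1 := by
    ext i j
    have := horth i j
    simp only [Matrix.mul_apply, conjTranspose_apply, hV, Matrix.of_apply,
      dotProduct, Matrix.mulVec, Pi.star_apply] at this ⊢
    rw [Matrix.one_apply, ← this]
    simp only [Finset.mul_sum, Finset.sum_mul]
    rw [Finset.sum_comm]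
    apply Finset.sum_congr rfl; intro a _
    apply Finset.sum_congr rfl; intro b _
    ring
  have hone : ∑ j, P j = 1 := by
    have h1 : V * (Vᴴ * E) = 1 := by
      rw [mul_eq_one_comm]
      exact hVEV
    have h2 : ∑ j, vecMulVec (v j) (star (v j)) = V * Vᴴ := by
      ext a b
      simp [Matrix.sum_apply, Matrix.mul_apply, vecMulVec_apply, hV, mul_comm]
    calc ∑ j, P j = (∑ j, vecMulVec (v j) (star (v j))) * E := by
          rw [Finset.sum_mul]
      _ = V * (Vᴴ * E) := by rw [h2, Matrix.mul_assoc]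
      _ = 1 := h1
  set c : Fin L → ℂ := fun j => (1 : ℂ) - Complex.I * (lam j : ℂ) * (Δt : ℂ) with hc
  have hbase : (1 : Matrix (Fin L) (Fin L) ℂ) - (Complex.I * (Δt : ℂ)) • M
      = ∑ j, c j • P j := by
    rw [hM, ← hone, Finset.smul_sum, ← Finset.sum_sub_distrib]
    apply Finset.sum_congr rfl; intro j _
    rw [hc]
    simp only [smul_smul, sub_smul, one_smul]
    ring_nf
    rfl
  rw [hbase]
  induction N with
  | zero => simp [hone]; exact hone.symm
  | succ n ih =>
      rw [pow_succ, ih, Finset.sum_mul]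
      apply Finset.sum_congr rfl
      intro i _
      rw [Finset.mul_sum]
      have : ∀ j ∈ Finset.univ, (c i ^ n • P i) * (c j • P j)
          = if j = i then c i ^ (n+1) • P i else 0 := by
        intro j _
        rw [Matrix.smul_mul, Matrix.mul_smul, hPP i j]
        by_cases h : j = i
        · subst h; simp [pow_succ]; module
        · simp [Ne.symm h, h]
      rw [Finset.sum_congr rfl this, Finset.sum_ite_eq' Finset.univ i]
      simp [hc, hP]
end

section
/- Let H be an n×n Hermitian complex matrix of rank r and let φ ∈ ℂ^n. Then for every real t, the vector exp(−itH)·φ lies in the subspace span{φ, Hφ, H²φ, …, H^r φ}. -/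
open Matrix

/-- For a Hermitian matrix `H` of rank `r`, the time evolution `exp(-itH) φ`
lies in the Krylov subspace `span{φ, Hφ, …, H^r φ}` for every real `t`. -/
theorem time_evolution_mem_krylov_of_rank
    (n r : ℕ) (H : Matrix (Fin n) (Fin n) ℂ)
    (hH : H.IsHermitian) (hrank : H.rank = r)
    (φ : Fin n → ℂ) (t : ℝ) :
    (NormedSpace.exp ((-(Complex.I * (t : ℂ))) • H)).mulVec φ ∈
      Submodule.span ℂ {w | ∃ k : ℕ, k ≤ r ∧ w = (H ^ k).mulVec φ} := by
  classical
  set g : ℕ → (Fin n → ℂ) := fun k => (H ^ k).mulVec φ with hg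
  set K : Submodule ℂ (Fin n → ℂ) :=
    Submodule.span ℂ {w | ∃ k : ℕ, k ≤ r ∧ w = (H ^ k).mulVec φ} with hK
  have hgK : ∀ k, k ≤ r → g k ∈ K :=
    fun k hk => Submodule.subset_span ⟨k, hk, rfl⟩
  have hsucc : ∀ m, g (m + 1) = H.mulVec (g m) := by
    intro m
    simp only [hg, pow_succ', ← Matrix.mulVec_mulVec]
  -- the ambient space of all Krylov vectors
  set W : Submodule ℂ (Fin n → ℂ) :=
    Submodule.span ℂ {φ} ⊔ LinearMap.range H.mulVecLin with hW
  have hgW : ∀ m, g m ∈ W := by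
    intro m
    cases m with
    | zero =>
      have hg0 : g 0 = φ := by simp [hg]
      exact hg0 ▸ Submodule.mem_sup_left (Submodule.mem_span_singleton_self φ)
    | succ m =>
      refine Submodule.mem_sup_right ?_
      rw [hsucc]
      exact ⟨g m, rfl⟩
  have hWfin : Module.finrank ℂ W ≤ r + 1 := by
    have h1 : Module.finrank ℂ (Submodule.span ℂ ({φ} : Set (Fin n → ℂ))) ≤ 1 := by
      simpa using finrank_span_le_card ({φ} : Set (Fin n → ℂ))
    have h2 : Module.finrank ℂ (LinearMap.range H.mulVecLin) = r := hrank
    have := Submodule.finrank_sup_add_finrank_inf_eq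
      (Submodule.span ℂ ({φ} : Set (Fin n → ℂ))) (LinearMap.range H.mulVecLin)
    rw [hW]
    omega
  -- the chain of Krylov subspaces
  set C : ℕ → Submodule ℂ (Fin n → ℂ) :=
    fun m => Submodule.span ℂ (g '' Set.Iio m) with hC
  have hCW : ∀ m, C m ≤ W := by
    intro m
    rw [hC]
    refine Submodule.span_le.2 ?_
    rintro _ ⟨i, -, rfl⟩
    exact hgW i
  have hCmono : ∀ m, C m ≤ C (m + 1) := by
    intro m
    exact Submodule.span_mono (Set.image_mono fun i (hi : i < m) => hi.trans (Nat.lt_succ_self m))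
  -- there is a stabilization index j ≤ r + 1
  obtain ⟨j, hjle, hjmem⟩ : ∃ j, j ≤ r + 1 ∧ g j ∈ C j := by
    by_contra hcon
    push_neg at hcon
    have hlt : ∀ j, j ≤ r + 1 → C j < C (j + 1) := by
      intro j hj
      refine lt_of_le_of_ne (hCmono j) fun he => ?_
      exact hcon j hj (he ▸ Submodule.subset_span ⟨j, Nat.lt_succ_self j, rfl⟩)
    have hfr : ∀ j, j ≤ r + 2 → j ≤ Module.finrank ℂ (C j) := by
      intro j
      induction j with
      | zero => intro _; omega
      | succ j ih =>
        intro hj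
        have h1 := ih (by omega)
        have h2 := Submodule.finrank_lt_finrank_of_lt (hlt j (by omega))
        omega
    have h3 := hfr (r + 2) le_rfl
    have h4 : Module.finrank ℂ (C (r + 2)) ≤ Module.finrank ℂ W :=
      Submodule.finrank_mono (hCW (r + 2))
    omega
  -- all Krylov vectors lie in C j, which lies in K
  have hCjK : C j ≤ K := by
    rw [hC]
    refine Submodule.span_le.2 ?_
    rintro _ ⟨i, hi, rfl⟩
    exact hgK i (by exact Nat.lt_succ_iff.1 (lt_of_lt_of_le hi hjle))
  have hinv : Submodule.map H.mulVecLin (C j) ≤ C j := by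
    rw [hC, Submodule.map_span, Submodule.span_le]
    rintro _ ⟨_, ⟨i, hi, rfl⟩, rfl⟩
    have : H.mulVecLin (g i) = g (i + 1) := (hsucc i).symm
    rw [this]
    rcases Nat.lt_or_ge (i + 1) j with h | h
    · exact Submodule.subset_span ⟨i + 1, h, rfl⟩
    · have : i + 1 = j := le_antisymm hi h
      rw [this]; exact hjmem
  have hall : ∀ m, g m ∈ C j := by
    intro m
    induction m with
    | zero =>
      rcases Nat.eq_zero_or_pos j with h | h
      · exact h ▸ hjmem
      · exact Submodule.subset_span ⟨0, h, rfl⟩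
    | succ m ih =>
      rw [hsucc]
      exact hinv ⟨g m, ih, rfl⟩
  have key : ∀ m, g m ∈ K := fun m => hCjK (hall m)
  -- now the analytic part
  letI : SeminormedRing (Matrix (Fin n) (Fin n) ℂ) := Matrix.linftyOpSemiNormedRing
  letI : NormedRing (Matrix (Fin n) (Fin n) ℂ) := Matrix.linftyOpNormedRing
  letI : NormedAlgebra ℂ (Matrix (Fin n) (Fin n) ℂ) := Matrix.linftyOpNormedAlgebra
  set A : Matrix (Fin n) (Fin n) ℂ := (-(Complex.I * (t : ℂ))) • H with hA
  have hsum : HasSum (fun k : ℕ => (Nat.factorial k : ℂ)⁻¹ • A ^ k) (NormedSpace.exp A) :=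
    NormedSpace.exp_series_hasSum_exp' A
  -- apply the continuous linear map M ↦ M.mulVec φ
  let L : Matrix (Fin n) (Fin n) ℂ →ₗ[ℂ] (Fin n → ℂ) :=
    { toFun := fun M => M.mulVec φ
      map_add' := fun M N => Matrix.add_mulVec M N φ
      map_smul' := fun c M => (Matrix.smul_mulVec c M φ) }
  have hLcont : Continuous L := L.continuous_of_finiteDimensional
  have hsum2 : HasSum (fun k : ℕ => L ((Nat.factorial k : ℂ)⁻¹ • A ^ k))
      (L (NormedSpace.exp A)) := hsum.map L hLcont
  have hterm : ∀ k : ℕ, L ((Nat.factorial k : ℂ)⁻¹ • A ^ k) ∈ K := by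
    intro k
    have hAk : A ^ k = ((-(Complex.I * (t : ℂ))) ^ k) • H ^ k := by
      rw [hA, smul_pow]
    have : L ((Nat.factorial k : ℂ)⁻¹ • A ^ k)
        = ((Nat.factorial k : ℂ)⁻¹ * (-(Complex.I * (t : ℂ))) ^ k) • g k := by
      rw [hAk, L.map_smul, L.map_smul, mul_smul]
      rfl
    rw [this]
    exact K.smul_mem _ (key k)
  have hclosed : IsClosed (K : Set (Fin n → ℂ)) :=
    Submodule.closed_of_finiteDimensional K
  have htend := hsum2.tendsto_sum_nat
  have : L (NormedSpace.exp A) ∈ K := by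
    refine hclosed.mem_of_tendsto htend ?_
    filter_upwards with N
    exact Submodule.sum_mem K fun k _ => hterm k
  exact this
end

section
/- Let A and Ã be n×n Hermitian complex matrices. Let V_0 be an n×l complex matrix whose columns are orthonormal, Λ_0 an l×l real diagonal matrix with A V_0 = V_0 Λ_0 and all diagonal entries of Λ_0 contained in the open interval (a,b). Let Ṽ_1 be an n×m complex matrix whose columns are orthonormal, Λ̃_1 an m×m real diagonal matrix with Ã Ṽ_1 = Ṽ_1 Λ̃_1 and all diagonal entries of Λ̃_1 lying outside the interval (a−δ, b+δ), where δ > 0. Then δ · ‖V_0† Ṽ_1‖ ≤ ‖V_0† (Ã − A) Ṽ_1‖, where ‖·‖ denotes the spectral (operator) norm. -/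
open Matrix

/-- The spectral (operator) norm of a complex matrix, i.e. the operator norm of the
induced linear map between Euclidean spaces (equal to the largest singular value). -/
noncomputable def spectralNorm' {p q : ℕ} (M : Matrix (Fin p) (Fin q) ℂ) : ℝ :=
  ‖LinearMap.toContinuousLinearMap (Matrix.toEuclideanLin M)‖

open scoped Matrix.Norms.L2Operator in
lemma spectralNorm'_eq_l2 {p q : ℕ} (M : Matrix (Fin p) (Fin q) ℂ) :
    spectralNorm' M = ‖M‖ := rfl

open scoped Matrix.Norms.L2Operator in
lemma diag_norm_le {k : ℕ} (d : Fin k → ℂ) (C : ℝ) (hC : 0 ≤ C)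
    (h : ∀ i, ‖d i‖ ≤ C) : ‖(Matrix.diagonal d : Matrix (Fin k) (Fin k) ℂ)‖ ≤ C := by
  rw [Matrix.l2_opNorm_def]
  apply ContinuousLinearMap.opNorm_le_bound _ hC
  intro x
  show ‖Matrix.toEuclideanLin (Matrix.diagonal d) x‖ ≤ C * ‖x‖
  rw [EuclideanSpace.norm_eq, EuclideanSpace.norm_eq]
  rw [show C * Real.sqrt (∑ i, ‖x i‖^2) = Real.sqrt (C^2 * ∑ i, ‖x i‖^2) by
    rw [Real.sqrt_mul (by positivity), Real.sqrt_sq hC]]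
  apply Real.sqrt_le_sqrt
  rw [Finset.mul_sum]
  apply Finset.sum_le_sum
  intro i _
  have hi : (Matrix.toEuclideanLin (Matrix.diagonal d) x) i = d i * x i := by
    simp [Matrix.toEuclideanLin, Matrix.mulVec_diagonal]
  rw [hi, norm_mul, mul_pow]
  exact mul_le_mul_of_nonneg_right (pow_le_pow_left₀ (norm_nonneg _) (h i) 2) (by positivity)

open scoped Matrix.Norms.L2Operator in
/-- Davis–Kahan `sin Θ` theorem (operator-norm version): if `A V₀ = V₀ Λ₀` with
`V₀` having orthonormal columns and the eigenvalues in `Λ₀` contained in `(a, b)`,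
and `Ã Ṽ₁ = Ṽ₁ Λ̃₁` with `Ṽ₁` having orthonormal columns and the eigenvalues in
`Λ̃₁` excluded from `(a − δ, b + δ)` for some `δ > 0`, then
`δ ‖V₀ᴴ Ṽ₁‖ ≤ ‖V₀ᴴ (Ã − A) Ṽ₁‖` in the spectral norm. -/
theorem davis_kahan_sin_theta
    (n l m : ℕ) (A At : Matrix (Fin n) (Fin n) ℂ)
    (hA : A.IsHermitian) (hAt : At.IsHermitian)
    (V₀ : Matrix (Fin n) (Fin l) ℂ) (μ : Fin l → ℝ)
    (hV₀ : V₀ᴴ * V₀ = 1)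
    (hAV₀ : A * V₀ = V₀ * Matrix.diagonal (fun i => (μ i : ℂ)))
    (a b δ : ℝ) (hδ : 0 < δ)
    (hμ : ∀ i, μ i ∈ Set.Ioo a b)
    (Vt₁ : Matrix (Fin n) (Fin m) ℂ) (ν : Fin m → ℝ)
    (hVt₁ : Vt₁ᴴ * Vt₁ = 1)
    (hAtVt₁ : At * Vt₁ = Vt₁ * Matrix.diagonal (fun i => (ν i : ℂ)))
    (hν : ∀ i, ν i ∉ Set.Ioo (a - δ) (b + δ)) :
    δ * spectralNorm' (V₀ᴴ * Vt₁) ≤ spectralNorm' (V₀ᴴ * (At - A) * Vt₁) := by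
  rw [spectralNorm'_eq_l2, spectralNorm'_eq_l2]
  rcases Nat.eq_zero_or_pos l with hl | hl
  · subst hl
    have hz : V₀ᴴ * Vt₁ = 0 := by ext i j; exact i.elim0
    rw [hz, norm_zero, mul_zero]
    exact norm_nonneg _
  -- nontrivial case
  set c : ℝ := (a + b) / 2 with hc
  set r : ℝ := (b - a) / 2 with hr
  have hab : a < b := (hμ ⟨0, hl⟩).1.trans (hμ ⟨0, hl⟩).2
  have hrpos : 0 < r := by rw [hr]; linarith
  set S : Matrix (Fin l) (Fin m) ℂ := V₀ᴴ * Vt₁ with hS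
  set Dμ' : Matrix (Fin l) (Fin l) ℂ := Matrix.diagonal (fun i => ((μ i - c : ℝ) : ℂ)) with hDμ'
  set Dν' : Matrix (Fin m) (Fin m) ℂ := Matrix.diagonal (fun j => ((ν j - c : ℝ) : ℂ)) with hDν'
  set Dinv : Matrix (Fin m) (Fin m) ℂ :=
    Matrix.diagonal (fun j => (((ν j - c : ℝ) : ℂ))⁻¹) with hDinv
  -- eigenvalue bounds
  have hμc : ∀ i, |μ i - c| ≤ r := by
    intro i
    have h1 := (hμ i).1; have h2 := (hμ i).2
    rw [abs_le, hc, hr]; constructor <;> linarith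
  have hνc : ∀ j, r + δ ≤ |ν j - c| := by
    intro j
    have := hν j
    simp only [Set.mem_Ioo, not_and, not_lt] at this
    rcases le_or_gt (ν j) (a - δ) with h | h
    · rw [abs_of_nonpos (by rw [hc]; linarith)]
      rw [hc, hr]; linarith
    · have hb : b + δ ≤ ν j := this h
      rw [abs_of_nonneg (by rw [hc]; linarith)]
      rw [hc, hr]; linarith
  have hνne : ∀ j, ((ν j - c : ℝ) : ℂ) ≠ 0 := by
    intro j
    have := hνc j
    simp only [ne_eq, Complex.ofReal_eq_zero]
    intro h; rw [h, abs_zero] at this; linarith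
  -- key identity
  have keyA : V₀ᴴ * A = Matrix.diagonal (fun i => (μ i : ℂ)) * V₀ᴴ := by
    calc V₀ᴴ * A = V₀ᴴ * Aᴴ := by rw [hA.eq]
    _ = (A * V₀)ᴴ := by rw [Matrix.conjTranspose_mul]
    _ = (V₀ * Matrix.diagonal (fun i => (μ i : ℂ)))ᴴ := by rw [hAV₀]
    _ = (Matrix.diagonal (fun i => (μ i : ℂ)))ᴴ * V₀ᴴ := by rw [Matrix.conjTranspose_mul]
    _ = Matrix.diagonal (fun i => (μ i : ℂ)) * V₀ᴴ := by
          congr 1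
          ext i j
          rcases eq_or_ne i j with h | h
          · subst h; simp [Matrix.conjTranspose_apply, Complex.conj_ofReal]
          · simp [Matrix.conjTranspose_apply, Matrix.diagonal_apply_ne _ h,
              Matrix.diagonal_apply_ne _ (Ne.symm h)]
  have key : V₀ᴴ * (At - A) * Vt₁ = S * Dν' - Dμ' * S := by
    have e1 : V₀ᴴ * (At - A) * Vt₁
        = S * Matrix.diagonal (fun j => (ν j : ℂ))
          - Matrix.diagonal (fun i => (μ i : ℂ)) * S := by
      rw [Matrix.mul_sub, Matrix.sub_mul, Matrix.mul_assoc, hAtVt₁, ← Matrix.mul_assoc,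
        keyA]
      simp only [hS, Matrix.mul_assoc]
    have e2 : Dν' = Matrix.diagonal (fun j => (ν j : ℂ)) - (c : ℂ) • 1 := by
      ext i j
      rcases eq_or_ne i j with h | h
      · subst h
        simp only [hDν', Matrix.diagonal_apply_eq, Matrix.sub_apply, Matrix.smul_apply,
          Matrix.one_apply_eq, smul_eq_mul, mul_one]
        push_cast; ring
      · simp [hDν', Matrix.diagonal_apply_ne _ h, Matrix.one_apply_ne h]
    have e3 : Dμ' = Matrix.diagonal (fun i => (μ i : ℂ)) - (c : ℂ) • 1 := by
      ext i j
      rcases eq_or_ne i j with h | h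
      · subst h
        simp only [hDμ', Matrix.diagonal_apply_eq, Matrix.sub_apply, Matrix.smul_apply,
          Matrix.one_apply_eq, smul_eq_mul, mul_one]
        push_cast; ring
      · simp [hDμ', Matrix.diagonal_apply_ne _ h, Matrix.one_apply_ne h]
    rw [e1, e2, e3, Matrix.mul_sub, Matrix.sub_mul, Matrix.mul_smul, Matrix.smul_mul,
      Matrix.mul_one, Matrix.one_mul]
    abel
  -- inverse
  have hDmul : Dν' * Dinv = 1 := by
    rw [hDν', hDinv, Matrix.diagonal_mul_diagonal]
    rw [show (fun j => ((ν j - c : ℝ) : ℂ) * (((ν j - c : ℝ) : ℂ))⁻¹) = fun _ => (1 : ℂ) by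
      funext j; exact mul_inv_cancel₀ (hνne j)]
    exact Matrix.diagonal_one
  -- norm bounds
  have hDμnorm : ‖Dμ'‖ ≤ r := by
    apply diag_norm_le _ _ hrpos.le
    intro i
    rw [Complex.norm_real, Real.norm_eq_abs]
    exact hμc i
  have hrδ : 0 < r + δ := by linarith
  have hDinvnorm : ‖Dinv‖ ≤ (r + δ)⁻¹ := by
    apply diag_norm_le _ _ (by positivity)
    intro j
    rw [norm_inv, Complex.norm_real, Real.norm_eq_abs]
    have h1 := hνc j
    have h2 : 0 < |ν j - c| := lt_of_lt_of_le hrδ h1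
    rw [inv_le_inv₀ h2 hrδ]
    exact h1
  have hSbound : (r + δ) * ‖S‖ ≤ ‖S * Dν'‖ := by
    have h1 : ‖S‖ = ‖S * Dν' * Dinv‖ := by rw [Matrix.mul_assoc, hDmul, Matrix.mul_one]
    have h2 : ‖S * Dν' * Dinv‖ ≤ ‖S * Dν'‖ * ‖Dinv‖ := Matrix.l2_opNorm_mul _ _
    have h3 : ‖S * Dν'‖ * ‖Dinv‖ ≤ ‖S * Dν'‖ * (r + δ)⁻¹ :=
      mul_le_mul_of_nonneg_left hDinvnorm (norm_nonneg _)
    have h4 : ‖S‖ ≤ ‖S * Dν'‖ * (r + δ)⁻¹ := by rw [h1]; exact h2.trans h3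
    calc (r + δ) * ‖S‖ ≤ (r + δ) * (‖S * Dν'‖ * (r + δ)⁻¹) :=
          mul_le_mul_of_nonneg_left h4 hrδ.le
    _ = ‖S * Dν'‖ := by field_simp
  have hDμS : ‖Dμ' * S‖ ≤ r * ‖S‖ := by
    calc ‖Dμ' * S‖ ≤ ‖Dμ'‖ * ‖S‖ := Matrix.l2_opNorm_mul _ _
    _ ≤ r * ‖S‖ := mul_le_mul_of_nonneg_right hDμnorm (norm_nonneg _)
  have htri : ‖S * Dν'‖ - ‖Dμ' * S‖ ≤ ‖S * Dν' - Dμ' * S‖ := norm_sub_norm_le _ _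
  rw [key]
  nlinarith [norm_nonneg S]
end
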